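/- (SMDCT VII discrete orthogonality) Let N, n ≥ 1 and let k, k' ∈ D_N^+, i.e., integer vectors with N−1 ≥ k_1 ≥ … ≥ k_n ≥ 0 and N−1 ≥ k'_1 ≥ … ≥ k'_n ≥ 0. Then Σ_{r ∈ D_N^+} (∏_{i=1}^n c_{r_i}) · H_r^{−1} · cos⁺_{k+ρ}(2r_1/(2N−1), …, 2r_n/(2N−1)) · cos⁺_{k'+ρ}(2r_1/(2N−1), …, 2r_n/(2N−1)) = (H_k / d̃_k) · ((2N−1)/4)^n · δ_{k,k'}, where ρ = (1/2,…,1/2). -/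

import Mathlib

open Real Finset

/-- The symmetric multivariate cosine function
`cos⁺_λ(x) = Σ_{σ ∈ S_n} ∏_{i=1}^n cos(π λ_{σ(i)} x_i)`. -/
noncomputable def cosPlus (n : ℕ) (lam x : Fin n → ℝ) : ℝ :=
  ∑ σ : Equiv.Perm (Fin n), ∏ i : Fin n, Real.cos (Real.pi * lam (σ i) * x i)

/-- The coefficient `c_r`: `1/2` if `r = 0` or `r = N`, and `1` otherwise. -/
noncomputable def cc (N r : ℕ) : ℝ := if r = 0 ∨ r = N then 1 / 2 else 1

/-- `H_k`, the order of the stabilizer of `k` under the permutation action of `S_n`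
(where `σ(k)_i = k_{σ(i)}`, i.e. `σ(k) = k ∘ σ`). -/
def Hstab {n : ℕ} {α : Type*} [DecidableEq α] (k : Fin n → α) : ℕ :=
  (Finset.univ.filter fun σ : Equiv.Perm (Fin n) => k ∘ σ = k).card


lemma cos_sum_ne (M : ℕ) (hM : 1 ≤ M) (m : ℤ) (h : ¬ ((M : ℤ) ∣ m)) :
    ∑ r ∈ Finset.range M, Real.cos (2*π*m*r/M) = 0 := by
  have hM0 : (M : ℂ) ≠ 0 := Nat.cast_ne_zero.mpr (by omega)
  set z : ℂ := Complex.exp (2*π*m/M * Complex.I) with hz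
  have hz1 : z ≠ 1 := by
    intro hc
    rw [Complex.exp_eq_one_iff] at hc
    obtain ⟨t, ht⟩ := hc
    apply h
    refine ⟨t, ?_⟩
    have hπ : (π : ℂ) ≠ 0 := by exact_mod_cast Real.pi_ne_zero
    have : (m : ℂ) = (M : ℂ) * t := by
      have hπ2 : (2 * π * Complex.I : ℂ) ≠ 0 := by
        simp [Complex.I_ne_zero, hπ]
      field_simp at ht
      have h3 : (2 * π * Complex.I) * (m : ℂ) = (2 * π * Complex.I) * ((M : ℂ) * t) := by
        linear_combination (2 * π * Complex.I) * ht
      exact mul_left_cancel₀ hπ2 h3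
    exact_mod_cast this
  have hzM : z ^ M = 1 := by
    rw [hz, ← Complex.exp_nat_mul]
    have : (M : ℂ) * (2*π*m/M * Complex.I) = m * (2*π*Complex.I) := by
      field_simp
    rw [this, Complex.exp_int_mul_two_pi_mul_I]
  have hgeom : ∑ r ∈ Finset.range M, z ^ r = 0 := by
    rw [geom_sum_eq hz1, hzM]
    simp
  have hre : ∀ r : ℕ, (z ^ r).re = Real.cos (2*π*m*r/M) := by
    intro r
    rw [hz, ← Complex.exp_nat_mul]
    have : (r : ℂ) * (2*π*m/M * Complex.I) = ((2*π*m*r/M : ℝ) : ℂ) * Complex.I := by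
      push_cast; field_simp
    rw [this, Complex.exp_ofReal_mul_I_re]
  calc ∑ r ∈ Finset.range M, Real.cos (2*π*m*r/M)
      = (∑ r ∈ Finset.range M, z ^ r).re := by rw [Complex.re_sum]; exact Finset.sum_congr rfl fun r _ => (hre r).symm
    _ = 0 := by rw [hgeom]; simp

lemma weighted_cos_sum (N : ℕ) (hN : 1 ≤ N) (m : ℤ)
    (hsum : ¬ (((2*N-1 : ℕ) : ℤ) ∣ m) → ∑ r ∈ Finset.range (2*N-1), Real.cos (2*π*m*r/((2*N-1:ℕ))) = 0) :
    ∑ r ∈ Finset.range N, (if r = 0 then (1/2:ℝ) else 1) * Real.cos (2*π*m*r/((2*N-1 : ℕ):ℝ))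
      = if ((2*N-1:ℕ):ℤ) ∣ m then ((2*N-1:ℕ):ℝ)/2 else 0 := by
  set M : ℕ := 2*N-1 with hMdef
  have hM1 : 1 ≤ M := by omega
  have hMR : (M : ℝ) ≠ 0 := Nat.cast_ne_zero.mpr (by omega)
  by_cases hdvd : ((M:ℕ):ℤ) ∣ m
  · obtain ⟨t, ht⟩ := hdvd
    rw [if_pos ⟨t, ht⟩]
    have hcos : ∀ r : ℕ, Real.cos (2*π*m*r/(M:ℝ)) = 1 := by
      intro r
      have : 2*π*m*r/(M:ℝ) = ((t*r : ℤ):ℝ) * (2*π) := by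
        have : (m : ℝ) = (M:ℝ) * t := by exact_mod_cast ht
        rw [this]; push_cast; field_simp
      rw [this, Real.cos_int_mul_two_pi]
    simp only [hcos, mul_one]
    rw [Finset.range_eq_Ico, ← Finset.sum_Ico_consecutive _ (Nat.zero_le 1) (by omega : 1 ≤ N)]
    have h1 : (∑ x ∈ Finset.Ico 0 1, if x = 0 then (1/2:ℝ) else 1) = 1/2 := by simp
    have h2 : (∑ x ∈ Finset.Ico 1 N, if x = 0 then (1/2:ℝ) else 1) = (N:ℝ) - 1 := by
      rw [Finset.sum_congr rfl (fun x hx => if_neg (by simp only [Finset.mem_Ico] at hx; omega))]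
      rw [Finset.sum_const, Nat.card_Ico]
      rw [nsmul_eq_mul, mul_one, Nat.cast_sub hN, Nat.cast_one]
    rw [h1, h2]
    have hMcast : (M:ℝ) = 2*(N:ℝ) - 1 := by
      rw [hMdef]; push_cast [Nat.cast_sub (by omega : 1 ≤ 2*N)]; ring
    rw [hMcast]; ring
  · rw [if_neg hdvd]
    have h0 := hsum hdvd
    set T : ℝ := ∑ r ∈ Finset.Ico 1 N, Real.cos (2*π*m*r/(M:ℝ)) with hT
    have hsplit : ∑ r ∈ Finset.range M, Real.cos (2*π*m*r/(M:ℝ))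
        = (∑ r ∈ Finset.range N, Real.cos (2*π*m*r/(M:ℝ)))
          + ∑ r ∈ Finset.Ico N M, Real.cos (2*π*m*r/(M:ℝ)) := by
      rw [Finset.range_eq_Ico,
        ← Finset.sum_Ico_consecutive _ (Nat.zero_le N) (by omega : N ≤ M),
        ← Finset.range_eq_Ico]
    have hrefl : ∑ r ∈ Finset.Ico N M, Real.cos (2*π*m*r/(M:ℝ)) = T := by
      rw [hT]
      refine Finset.sum_nbij' (fun r => M - r) (fun r => M - r) ?_ ?_ ?_ ?_ ?_
      · intro a ha; simp only [Finset.mem_Ico] at *; omega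
      · intro a ha; simp only [Finset.mem_Ico] at *; omega
      · intro a ha; simp only [Finset.mem_Ico] at ha; omega
      · intro a ha; simp only [Finset.mem_Ico] at ha; omega
      · intro a ha
        simp only [Finset.mem_Ico] at ha
        have hcast : ((M - a : ℕ) : ℝ) = (M:ℝ) - a := by
          rw [Nat.cast_sub (by omega)]
        rw [hcast]
        have harg : 2*π*m*((M:ℝ)-a)/(M:ℝ) = -(2*π*m*a/(M:ℝ)) + (m:ℤ) * (2*π) := by
          field_simp; ring
        rw [harg, Real.cos_add_int_mul_two_pi, Real.cos_neg]
    have hfirst : ∑ r ∈ Finset.range N, Real.cos (2*π*m*r/(M:ℝ)) = 1 + T := by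
      rw [Finset.range_eq_Ico, ← Finset.sum_Ico_consecutive _ (Nat.zero_le 1) (by omega : 1 ≤ N)]
      congr 1
      simp
    have hweight : ∑ r ∈ Finset.range N, (if r = 0 then (1/2:ℝ) else 1) * Real.cos (2*π*m*r/(M:ℝ))
        = 1/2 + T := by
      rw [Finset.range_eq_Ico, ← Finset.sum_Ico_consecutive _ (Nat.zero_le 1) (by omega : 1 ≤ N)]
      congr 1
      · simp
      · refine Finset.sum_congr rfl fun r hr => ?_
        simp only [Finset.mem_Ico] at hr
        rw [if_neg (by omega), one_mul]
    rw [hweight]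
    rw [hsplit, hrefl, hfirst] at h0
    linarith

lemma weighted_cos_sum' (N : ℕ) (hN : 1 ≤ N) (m : ℤ) :
    ∑ r ∈ Finset.range N, (if r = 0 then (1/2:ℝ) else 1) * Real.cos (2*π*m*r/(2*(N:ℝ)-1))
      = if ((2*N-1:ℕ):ℤ) ∣ m then (2*(N:ℝ)-1)/2 else 0 := by
  have hMcast : ((2*N-1:ℕ):ℝ) = 2*(N:ℝ)-1 := by
    push_cast [Nat.cast_sub (by omega : 1 ≤ 2*N)]; ring
  have h := weighted_cos_sum N hN m (fun hd => cos_sum_ne (2*N-1) (by omega) m hd)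
  rw [hMcast] at h
  exact h

lemma oneD (N : ℕ) (hN : 1 ≤ N) (a b : ℕ) (ha : a ≤ N-1) (hb : b ≤ N-1) :
    ∑ x : Fin N, cc N (x:ℕ) *
        (Real.cos (π * ((a:ℝ)+1/2) * (2*((x:ℕ):ℝ)/(2*(N:ℝ)-1))) *
         Real.cos (π * ((b:ℝ)+1/2) * (2*((x:ℕ):ℝ)/(2*(N:ℝ)-1))))
      = if a = b then (2*(N:ℝ)-1)/(4 * cc N (a+1)) else 0 := by
  have hMR : (2*(N:ℝ)-1) ≠ 0 := by
    have : (1:ℝ) ≤ (N:ℝ) := by exact_mod_cast hN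
    nlinarith
  set m₁ : ℤ := (a:ℤ) - b with hm₁
  set m₂ : ℤ := (a:ℤ) + b + 1 with hm₂
  have key : ∀ r : ℕ, r < N → cc N r *
        (Real.cos (π * ((a:ℝ)+1/2) * (2*(r:ℝ)/(2*(N:ℝ)-1))) *
         Real.cos (π * ((b:ℝ)+1/2) * (2*(r:ℝ)/(2*(N:ℝ)-1))))
      = ((if r = 0 then (1/2:ℝ) else 1) * Real.cos (2*π*m₁*r/(2*(N:ℝ)-1)))/2
        + ((if r = 0 then (1/2:ℝ) else 1) * Real.cos (2*π*m₂*r/(2*(N:ℝ)-1)))/2 := by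
    intro r hr
    have hcc : cc N r = if r = 0 then (1/2:ℝ) else 1 := by
      unfold cc
      by_cases h0 : r = 0
      · simp [h0]
      · rw [if_neg (by omega), if_neg h0]
    rw [hcc]
    set X := π * ((a:ℝ)+1/2) * (2*(r:ℝ)/(2*(N:ℝ)-1)) with hX
    set Y := π * ((b:ℝ)+1/2) * (2*(r:ℝ)/(2*(N:ℝ)-1)) with hY
    have h1 : 2*π*(m₁:ℝ)*r/(2*(N:ℝ)-1) = X - Y := by
      rw [hX, hY, hm₁]; push_cast; field_simp; ring
    have h2 : 2*π*(m₂:ℝ)*r/(2*(N:ℝ)-1) = X + Y := by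
      rw [hX, hY, hm₂]; push_cast; field_simp; ring
    rw [h1, h2, Real.cos_sub, Real.cos_add]
    ring
  rw [Fin.sum_univ_eq_sum_range (fun r => cc N r *
        (Real.cos (π * ((a:ℝ)+1/2) * (2*(r:ℝ)/(2*(N:ℝ)-1))) *
         Real.cos (π * ((b:ℝ)+1/2) * (2*(r:ℝ)/(2*(N:ℝ)-1)))))]
  rw [Finset.sum_congr rfl (fun r hr => key r (Finset.mem_range.mp hr))]
  rw [Finset.sum_add_distrib, ← Finset.sum_div, ← Finset.sum_div,
    weighted_cos_sum' N hN m₁, weighted_cos_sum' N hN m₂]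
  have hccA : cc N (a+1) = if a = N-1 then (1/2:ℝ) else 1 := by
    unfold cc
    by_cases hA : a = N-1
    · rw [if_pos (by omega), if_pos hA]
    · rw [if_neg (by omega), if_neg hA]
  by_cases hab : a = b
  · subst hab
    rw [if_pos rfl]
    have hd₁ : ((2*N-1:ℕ):ℤ) ∣ m₁ := by rw [hm₁]; simp
    rw [if_pos hd₁]
    by_cases hA : a = N-1
    · have hd₂ : ((2*N-1:ℕ):ℤ) ∣ m₂ := by
        rw [hm₂, hA]
        have : ((a:ℤ)) = (N:ℤ) - 1 := by rw [hA]; push_cast [Nat.cast_sub hN]; ring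
        refine ⟨1, ?_⟩
        push_cast [Nat.cast_sub (by omega : 1 ≤ 2*N)]
        omega
      rw [if_pos hd₂, hccA, if_pos hA]
      field_simp
      ring
    · have hd₂ : ¬ ((2*N-1:ℕ):ℤ) ∣ m₂ := by
        intro hdvd
        rw [hm₂] at hdvd
        have h1 : ((2*N-1:ℕ):ℤ) ∣ ((2*a+1 : ℕ):ℤ) := by
          convert hdvd using 1; push_cast; ring
        rw [Int.natCast_dvd_natCast] at h1
        have := Nat.le_of_dvd (by omega) h1
        omega
      rw [if_neg hd₂, hccA, if_neg hA]
      ring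
  · rw [if_neg hab]
    have hd₁ : ¬ ((2*N-1:ℕ):ℤ) ∣ m₁ := by
      intro hdvd
      have := Int.eq_zero_of_dvd_of_natAbs_lt_natAbs hdvd (by rw [hm₁]; omega)
      rw [hm₁] at this
      omega
    have hd₂ : ¬ ((2*N-1:ℕ):ℤ) ∣ m₂ := by
      intro hdvd
      rw [hm₂] at hdvd
      have h1 : ((2*N-1:ℕ):ℤ) ∣ ((a+b+1 : ℕ):ℤ) := by
        exact_mod_cast hdvd
      rw [Int.natCast_dvd_natCast] at h1
      have := Nat.le_of_dvd (by omega) h1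
      omega
    rw [if_neg hd₁, if_neg hd₂]
    ring

lemma cc_ne_zero (N m : ℕ) : cc N m ≠ 0 := by
  unfold cc; split <;> norm_num

lemma cosPlus_comp (n : ℕ) (lam x : Fin n → ℝ) (σ : Equiv.Perm (Fin n)) :
    cosPlus n lam (x ∘ ⇑σ) = cosPlus n lam x := by
  unfold cosPlus
  have step1 : ∀ ρ : Equiv.Perm (Fin n), ∏ i, Real.cos (π * lam (ρ i) * (x ∘ ⇑σ) i)
      = ∏ i, Real.cos (π * lam ((ρ * σ⁻¹) i) * x i) := by
    intro ρ
    rw [← Equiv.prod_comp σ (fun i => Real.cos (π * lam ((ρ * σ⁻¹) i) * x i))]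
    refine Finset.prod_congr rfl fun i _ => ?_
    simp [Equiv.Perm.mul_apply]
  rw [Finset.sum_congr rfl (fun ρ _ => step1 ρ)]
  exact Equiv.sum_comp (Equiv.mulRight σ⁻¹) (fun ρ => ∏ i, Real.cos (π * lam (ρ i) * x i))

/-- count of pairs lemma -/
lemma pair_count {n : ℕ} {α : Type*} [DecidableEq α] (k : Fin n → α) (C : ℝ) :
    ∑ σ : Equiv.Perm (Fin n), ∑ τ : Equiv.Perm (Fin n),
      (if (∀ i, k (σ i) = k (τ i)) then C else 0)
    = (n.factorial : ℝ) * (Hstab k : ℝ) * C := by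
  classical
  have inner : ∀ σ : Equiv.Perm (Fin n), ∑ τ : Equiv.Perm (Fin n),
      (if (∀ i, k (σ i) = k (τ i)) then C else 0) = (Hstab k : ℝ) * C := by
    intro σ
    rw [← Finset.sum_filter]
    rw [Finset.sum_const, nsmul_eq_mul]
    congr 1
    norm_cast
    unfold Hstab
    apply Finset.card_nbij' (fun τ => τ * σ⁻¹) (fun ρ => ρ * σ)
    · intro τ hτ
      simp only [Finset.mem_coe, Finset.mem_filter, Finset.mem_univ, true_and] at hτ ⊢
      funext x
      have := (hτ (σ⁻¹ x)).symm
      simpa [Equiv.Perm.mul_apply] using this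
    · intro ρ hρ
      simp only [Finset.mem_coe, Finset.mem_filter, Finset.mem_univ, true_and] at hρ ⊢
      intro i
      have := congrFun hρ (σ i)
      simpa [Equiv.Perm.mul_apply] using this.symm
    · intro τ _; group
    · intro ρ _; group
  rw [Finset.sum_congr rfl (fun σ _ => inner σ), Finset.sum_const, Finset.card_univ,
    Fintype.card_perm, nsmul_eq_mul, Fintype.card_fin, mul_assoc]

lemma cube_sum (n N : ℕ) (hN : 1 ≤ N) (k k' : Fin n → ℕ)
    (hkb : ∀ i, k i ≤ N - 1) (hk'b : ∀ i, k' i ≤ N - 1) :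
    ∑ r : Fin n → Fin N, ((∏ i, cc N (r i)) *
        cosPlus n (fun i => (k i : ℝ) + 1 / 2) (fun i => 2 * ((r i : ℕ) : ℝ) / (2 * N - 1)) *
        cosPlus n (fun i => (k' i : ℝ) + 1 / 2) (fun i => 2 * ((r i : ℕ) : ℝ) / (2 * N - 1)))
    = ∑ σ : Equiv.Perm (Fin n), ∑ τ : Equiv.Perm (Fin n),
        (if (∀ i, k (σ i) = k' (τ i)) then ∏ i, (2*(N:ℝ)-1)/(4 * cc N (k (σ i)+1)) else 0) := by
  classical
  have step1 : ∀ r : Fin n → Fin N, ((∏ i, cc N (r i)) *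
        cosPlus n (fun i => (k i : ℝ) + 1 / 2) (fun i => 2 * ((r i : ℕ) : ℝ) / (2 * N - 1)) *
        cosPlus n (fun i => (k' i : ℝ) + 1 / 2) (fun i => 2 * ((r i : ℕ) : ℝ) / (2 * N - 1)))
      = ∑ σ : Equiv.Perm (Fin n), ∑ τ : Equiv.Perm (Fin n),
          ∏ i, (cc N (r i) *
            (Real.cos (π * ((k (σ i):ℝ)+1/2) * (2*((r i:ℕ):ℝ)/(2*(N:ℝ)-1))) *
             Real.cos (π * ((k' (τ i):ℝ)+1/2) * (2*((r i:ℕ):ℝ)/(2*(N:ℝ)-1))))) := by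
    intro r
    unfold cosPlus
    rw [mul_assoc, Finset.sum_mul_sum]
    rw [Finset.mul_sum]
    refine Finset.sum_congr rfl fun σ _ => ?_
    rw [Finset.mul_sum]
    refine Finset.sum_congr rfl fun τ _ => ?_
    symm
    rw [Finset.prod_mul_distrib, Finset.prod_mul_distrib]
  rw [Finset.sum_congr rfl (fun r _ => step1 r)]
  rw [Finset.sum_comm]
  refine Finset.sum_congr rfl fun σ _ => ?_
  rw [Finset.sum_comm]
  refine Finset.sum_congr rfl fun τ _ => ?_
  have prodsum : ∑ r : Fin n → Fin N,
      ∏ i, (cc N (r i) *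
            (Real.cos (π * ((k (σ i):ℝ)+1/2) * (2*((r i:ℕ):ℝ)/(2*(N:ℝ)-1))) *
             Real.cos (π * ((k' (τ i):ℝ)+1/2) * (2*((r i:ℕ):ℝ)/(2*(N:ℝ)-1)))))
      = ∏ i, ∑ x : Fin N, (cc N (x:ℕ) *
            (Real.cos (π * ((k (σ i):ℝ)+1/2) * (2*((x:ℕ):ℝ)/(2*(N:ℝ)-1))) *
             Real.cos (π * ((k' (τ i):ℝ)+1/2) * (2*((x:ℕ):ℝ)/(2*(N:ℝ)-1))))) := by
    rw [Finset.prod_univ_sum]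
    rw [← Fintype.piFinset_univ]
  rw [prodsum]
  have hval : ∀ i : Fin n, (∑ x : Fin N, (cc N (x:ℕ) *
            (Real.cos (π * ((k (σ i):ℝ)+1/2) * (2*((x:ℕ):ℝ)/(2*(N:ℝ)-1))) *
             Real.cos (π * ((k' (τ i):ℝ)+1/2) * (2*((x:ℕ):ℝ)/(2*(N:ℝ)-1))))))
      = if k (σ i) = k' (τ i) then (2*(N:ℝ)-1)/(4 * cc N (k (σ i)+1)) else 0 := by
    intro i
    exact oneD N hN (k (σ i)) (k' (τ i)) (hkb _) (hk'b _)
  rw [Finset.prod_congr rfl (fun i _ => hval i)]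
  by_cases hc : ∀ i, k (σ i) = k' (τ i)
  · rw [if_pos hc]
    exact Finset.prod_congr rfl fun i _ => if_pos (hc i)
  · rw [if_neg hc]
    push_neg at hc
    obtain ⟨i, hi⟩ := hc
    exact Finset.prod_eq_zero (Finset.mem_univ i) (if_neg hi)

section Comb
variable {n : ℕ} {α : Type*} [DecidableEq α] [LinearOrder α]
lemma comp_mul_eq (s : Fin n → α) (σ τ : Equiv.Perm (Fin n)) :
    s ∘ ⇑(σ * τ) = (s ∘ ⇑σ) ∘ ⇑τ := by
  ext x; simp [Equiv.Perm.mul_apply]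

lemma antitone_unique {f : Fin n → α} {σ τ : Equiv.Perm (Fin n)}
    (h1 : Antitone (f ∘ ⇑σ)) (h2 : Antitone (f ∘ ⇑τ)) : f ∘ ⇑σ = f ∘ ⇑τ := by
  have hrev : Antitone (Fin.rev : Fin n → Fin n) := fun i j hij => Fin.rev_le_rev.mpr hij
  have m1 : Monotone (f ∘ ⇑(Fin.revPerm.trans σ)) := by
    have : f ∘ ⇑(Fin.revPerm.trans σ) = (f ∘ ⇑σ) ∘ (Fin.rev : Fin n → Fin n) := rfl
    rw [this]; exact h1.comp hrev
  have m2 : Monotone (f ∘ ⇑(Fin.revPerm.trans τ)) := by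
    have : f ∘ ⇑(Fin.revPerm.trans τ) = (f ∘ ⇑τ) ∘ (Fin.rev : Fin n → Fin n) := rfl
    rw [this]; exact h2.comp hrev
  have := Tuple.unique_monotone m1 m2
  funext i
  have := congrFun this (Fin.rev i)
  simpa [Equiv.trans_apply] using this

/-- a permutation making `r` antitone -/
def sp (r : Fin n → α) : Equiv.Perm (Fin n) := Fin.revPerm.trans (Tuple.sort r)

lemma antitone_comp_sp (r : Fin n → α) : Antitone (r ∘ ⇑(sp r)) := by
  have hms : Monotone (r ∘ ⇑(Tuple.sort r)) := Tuple.monotone_sort r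
  intro i j hij
  have : r ∘ ⇑(sp r) = (r ∘ ⇑(Tuple.sort r)) ∘ (Fin.rev : Fin n → Fin n) := rfl
  rw [this]
  exact (hms.comp_antitone (fun a b hab => Fin.rev_le_rev.mpr hab)) hij

/-- the antitone rearrangement -/
def sortT (r : Fin n → α) : Fin n → α := r ∘ ⇑(sp r)

lemma sortT_antitone (r : Fin n → α) : Antitone (sortT r) := antitone_comp_sp r

lemma sortT_comp_inv (r : Fin n → α) : sortT r ∘ ⇑(sp r)⁻¹ = r := by
  funext x; simp [sortT]

lemma sortT_of_antitone {s : Fin n → α} (hs : Antitone s) (σ : Equiv.Perm (Fin n)) :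
    sortT (s ∘ ⇑σ) = s := by
  have h1 : Antitone ((s ∘ ⇑σ) ∘ ⇑(sp (s ∘ ⇑σ))) := antitone_comp_sp _
  have h2 : Antitone (s ∘ ⇑(1 : Equiv.Perm (Fin n))) := by simpa using hs
  have h3 : s ∘ ⇑(σ * sp (s ∘ ⇑σ)) = (s ∘ ⇑σ) ∘ ⇑(sp (s ∘ ⇑σ)) := comp_mul_eq s σ _
  have := antitone_unique (σ := σ * sp (s ∘ ⇑σ)) (τ := 1) (by rw [h3]; exact h1) h2
  rw [h3] at this
  simpa [sortT] using this

lemma hstab_comp (r : Fin n → α) (σ : Equiv.Perm (Fin n)) :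
    Hstab (r ∘ ⇑σ) = Hstab r := by
  unfold Hstab
  apply Finset.card_nbij' (fun τ => σ * τ * σ⁻¹) (fun ρ => σ⁻¹ * ρ * σ)
  · intro τ hτ
    simp only [Finset.mem_coe, Finset.mem_filter, Finset.mem_univ, true_and] at hτ ⊢
    funext x
    have := congrFun hτ (σ⁻¹ x)
    simpa [Equiv.Perm.mul_apply] using this
  · intro ρ hρ
    simp only [Finset.mem_coe, Finset.mem_filter, Finset.mem_univ, true_and] at hρ ⊢
    funext x
    have := congrFun hρ (σ x)
    simpa [Equiv.Perm.mul_apply] using this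
  · intro τ _; group
  · intro ρ _; group

lemma hstab_pos (r : Fin n → α) : 0 < Hstab r := by
  unfold Hstab
  refine Finset.card_pos.mpr ⟨1, ?_⟩
  simp

lemma sym_sum {N : ℕ} (h : (Fin n → Fin N) → ℝ)
    (hsym : ∀ (σ : Equiv.Perm (Fin n)) (r : Fin n → Fin N), h (r ∘ ⇑σ) = h r) :
    ∑ r : Fin n → Fin N, (Hstab r : ℝ) * h r
      = (n.factorial : ℝ) * ∑ r ∈ Finset.univ.filter (fun r : Fin n → Fin N => Antitone r), h r := by
  classical
  have lhs_eq : ∑ r : Fin n → Fin N, (Hstab r : ℝ) * h r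
      = ∑ q ∈ (Finset.univ : Finset (Fin n → Fin N)).sigma
          (fun r => Finset.univ.filter (fun τ : Equiv.Perm (Fin n) => r ∘ ⇑τ = r)), h q.1 := by
    rw [Finset.sum_sigma]
    refine Finset.sum_congr rfl fun r _ => ?_
    have hc : ∀ s ∈ Finset.univ.filter (fun τ : Equiv.Perm (Fin n) => r ∘ ⇑τ = r),
        h ((⟨r, s⟩ : Σ _ : Fin n → Fin N, Equiv.Perm (Fin n)).fst) = h r := fun _ _ => rfl
    rw [Finset.sum_congr rfl hc, Finset.sum_const, nsmul_eq_mul]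
    rfl
  have rhs_eq : (n.factorial : ℝ) * ∑ r ∈ Finset.univ.filter (fun r : Fin n → Fin N => Antitone r), h r
      = ∑ p ∈ (Finset.univ : Finset (Equiv.Perm (Fin n))) ×ˢ
          (Finset.univ.filter (fun r : Fin n → Fin N => Antitone r)), h (p.2 ∘ ⇑p.1) := by
    rw [Finset.sum_product]
    rw [Finset.sum_congr rfl (fun σ _ => Finset.sum_congr rfl (fun s _ => hsym σ s))]
    rw [Finset.sum_const, Finset.card_univ, Fintype.card_perm, nsmul_eq_mul, Fintype.card_fin]
  rw [lhs_eq, rhs_eq]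
  symm
  refine Finset.sum_nbij' (i := fun p => ⟨p.2 ∘ ⇑p.1, p.1⁻¹ * (sp (p.2 ∘ ⇑p.1))⁻¹⟩)
    (j := fun q => ((sp q.1)⁻¹ * q.2⁻¹, sortT q.1)) ?_ ?_ ?_ ?_ ?_
  · rintro ⟨σ, s⟩ hp
    simp only [Finset.mem_product, Finset.mem_univ, Finset.mem_filter, true_and] at hp
    simp only [Finset.mem_sigma, Finset.mem_univ, Finset.mem_filter, true_and]
    set r := s ∘ ⇑σ with hr
    have hs : sortT r = s := sortT_of_antitone hp σ
    funext x
    show r (σ⁻¹ ((sp r)⁻¹ x)) = r x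
    have h1 : r ∘ ⇑σ⁻¹ = s := by funext y; simp [hr]
    have h2 : s ∘ ⇑(sp r)⁻¹ = r := by
      rw [← hs]; exact sortT_comp_inv r
    calc r (σ⁻¹ ((sp r)⁻¹ x)) = s ((sp r)⁻¹ x) := congrFun h1 _
      _ = r x := congrFun h2 x
  · rintro ⟨r, τ⟩ hq
    simp only [Finset.mem_sigma, Finset.mem_univ, Finset.mem_filter, true_and] at hq
    simp only [Finset.mem_product, Finset.mem_univ, Finset.mem_filter, true_and]
    exact sortT_antitone r
  · rintro ⟨σ, s⟩ hp
    simp only [Finset.mem_product, Finset.mem_univ, Finset.mem_filter, true_and] at hp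
    have hs : sortT (s ∘ ⇑σ) = s := sortT_of_antitone hp σ
    simp only [Prod.mk.injEq]
    constructor
    · group
    · exact hs
  · rintro ⟨r, τ⟩ hq
    simp only [Finset.mem_sigma, Finset.mem_univ, Finset.mem_filter, true_and] at hq
    have hr1 : sortT r ∘ ⇑((sp r)⁻¹ * τ⁻¹) = r := by
      rw [comp_mul_eq, sortT_comp_inv]
      funext x
      have := congrFun hq (τ⁻¹ x)
      simpa using this.symm
    refine Sigma.ext hr1 (heq_of_eq_of_heq ?_ (heq_of_eq rfl))
    · dsimp only
      rw [hr1]; group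
  · rintro ⟨σ, s⟩ _
    rfl
end Comb

theorem SMDCT_VII_orthogonality (n N : ℕ) (hn : 1 ≤ n) (hN : 1 ≤ N)
    (k k' : Fin n → ℕ)
    (hk : ∀ i j : Fin n, i ≤ j → k j ≤ k i) (hkb : ∀ i, k i ≤ N - 1)
    (hk' : ∀ i j : Fin n, i ≤ j → k' j ≤ k' i) (hk'b : ∀ i, k' i ≤ N - 1) :
    ∑ r ∈ Finset.univ.filter
        (fun r : Fin n → Fin N => ∀ i j : Fin n, i ≤ j → (r j : ℕ) ≤ (r i : ℕ)),
      (∏ i : Fin n, cc N (r i)) * ((Hstab r : ℝ))⁻¹ *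
        cosPlus n (fun i => (k i : ℝ) + 1 / 2)
          (fun i => 2 * ((r i : ℕ) : ℝ) / (2 * N - 1)) *
        cosPlus n (fun i => (k' i : ℝ) + 1 / 2)
          (fun i => 2 * ((r i : ℕ) : ℝ) / (2 * N - 1))
      = (Hstab k : ℝ) / (∏ i : Fin n, cc N (k i + 1)) * ((2 * (N : ℝ) - 1) / 4) ^ n *
          (if k = k' then (1 : ℝ) else 0) := by
  classical
  have hfact : (n.factorial : ℝ) ≠ 0 := Nat.cast_ne_zero.mpr (Nat.factorial_ne_zero n)
  have hkA : Antitone k := fun i j hij => hk i j hij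
  have hk'A : Antitone k' := fun i j hij => hk' i j hij
  have hfilter : (Finset.univ.filter
        (fun r : Fin n → Fin N => ∀ i j : Fin n, i ≤ j → (r j : ℕ) ≤ (r i : ℕ)))
      = Finset.univ.filter (fun r : Fin n → Fin N => Antitone r) := by
    refine Finset.filter_congr fun r _ => ?_
    constructor
    · intro h i j hij; exact h i j hij
    · intro h i j hij; exact h hij
  rw [hfilter]
  set F : (Fin n → Fin N) → ℝ := fun r =>
    (∏ i : Fin n, cc N (r i)) * ((Hstab r : ℝ))⁻¹ *
      cosPlus n (fun i => (k i : ℝ) + 1 / 2) (fun i => 2 * ((r i : ℕ) : ℝ) / (2 * N - 1)) *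
      cosPlus n (fun i => (k' i : ℝ) + 1 / 2) (fun i => 2 * ((r i : ℕ) : ℝ) / (2 * N - 1))
    with hF
  have hsymF : ∀ (σ : Equiv.Perm (Fin n)) (r : Fin n → Fin N), F (r ∘ ⇑σ) = F r := by
    intro σ r
    rw [hF]
    simp only
    have e1 : (∏ i : Fin n, cc N ((r ∘ ⇑σ) i)) = ∏ i : Fin n, cc N (r i) :=
      Equiv.prod_comp σ (fun i => cc N (r i))
    have e2 : Hstab (r ∘ ⇑σ) = Hstab r := hstab_comp r σ
    have e3 : (fun i => 2 * (((r ∘ ⇑σ) i : ℕ) : ℝ) / (2 * N - 1))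
        = (fun i => 2 * ((r i : ℕ) : ℝ) / (2 * N - 1)) ∘ ⇑σ := rfl
    rw [e1, e2, e3, cosPlus_comp, cosPlus_comp]
  have key := sym_sum F hsymF
  have hHF : ∀ r : Fin n → Fin N, (Hstab r : ℝ) * F r
      = (∏ i : Fin n, cc N (r i)) *
        cosPlus n (fun i => (k i : ℝ) + 1 / 2) (fun i => 2 * ((r i : ℕ) : ℝ) / (2 * N - 1)) *
        cosPlus n (fun i => (k' i : ℝ) + 1 / 2) (fun i => 2 * ((r i : ℕ) : ℝ) / (2 * N - 1)) := by
    intro r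
    have h0 : (Hstab r : ℝ) ≠ 0 := Nat.cast_ne_zero.mpr (hstab_pos r).ne'
    rw [hF]
    beta_reduce
    rw [show ∀ a b c : ℝ, (Hstab r:ℝ) * (a * (Hstab r:ℝ)⁻¹ * b * c) = a * b * c from fun a b c => by
      rw [show a * (Hstab r:ℝ)⁻¹ * b * c = (Hstab r:ℝ)⁻¹ * (a*b*c) by ring, mul_inv_cancel_left₀ h0]]
  have main : ∑ r ∈ Finset.univ.filter (fun r : Fin n → Fin N => Antitone r), F r
      = ((n.factorial : ℝ))⁻¹ * ∑ r : Fin n → Fin N, (Hstab r : ℝ) * F r := by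
    rw [key, ← mul_assoc, inv_mul_cancel₀ hfact, one_mul]
  rw [main, Finset.sum_congr rfl (fun r _ => hHF r), cube_sum n N hN k k' hkb hk'b]
  by_cases hkk' : k = k'
  · subst hkk'
    rw [if_pos rfl]
    set C : ℝ := ∏ i : Fin n, (2*(N:ℝ)-1)/(4 * cc N (k i + 1)) with hC
    have hterm : ∀ σ τ : Equiv.Perm (Fin n),
        (if (∀ i, k (σ i) = k (τ i)) then ∏ i, (2*(N:ℝ)-1)/(4 * cc N (k (σ i)+1)) else 0)
        = (if (∀ i, k (σ i) = k (τ i)) then C else 0) := by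
      intro σ τ
      rw [hC, Equiv.prod_comp σ (fun i => (2*(N:ℝ)-1)/(4 * cc N (k i + 1)))]
    rw [Finset.sum_congr rfl (fun σ _ => Finset.sum_congr rfl (fun τ _ => hterm σ τ))]
    rw [pair_count k C]
    have hCval : C = ((2 * (N : ℝ) - 1) / 4) ^ n * (∏ i : Fin n, cc N (k i + 1))⁻¹ := by
      rw [hC]
      have : ∀ i : Fin n, (2*(N:ℝ)-1)/(4 * cc N (k i + 1))
          = ((2 * (N : ℝ) - 1) / 4) * (cc N (k i + 1))⁻¹ := by
        intro i
        rw [div_mul_eq_div_div_swap, div_div]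
        ring_nf
      rw [Finset.prod_congr rfl (fun i _ => this i), Finset.prod_mul_distrib,
        Finset.prod_const, Finset.card_univ, Fintype.card_fin, Finset.prod_inv_distrib]
    rw [← mul_assoc, ← mul_assoc, inv_mul_cancel₀ hfact, one_mul, hCval,
      div_eq_mul_inv, mul_one]
    ring
  · rw [if_neg hkk', mul_zero]
    rw [Finset.sum_eq_zero, mul_zero]
    intro σ _
    rw [Finset.sum_eq_zero]
    intro τ _
    rw [if_neg]
    intro hc
    apply hkk'
    have hfun : k ∘ ⇑σ = k' ∘ ⇑τ := funext hc
    have h2 : k ∘ ⇑(σ * τ⁻¹) = k' := by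
      rw [comp_mul_eq, hfun]
      funext x; simp
    have h3 : Antitone (k ∘ ⇑(σ * τ⁻¹)) := by rw [h2]; exact hk'A
    have h4 : Antitone (k ∘ ⇑(1 : Equiv.Perm (Fin n))) := by
      simpa using hkA
    have h5 := antitone_unique h3 h4
    rw [h2] at h5
    rw [show k ∘ ⇑(1 : Equiv.Perm (Fin n)) = k from by funext x; simp] at h5
    exact h5.symm
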